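/- arXiv:1708.01833 — 3 statements merged into one kernel-verified Lean document; each statement's English description precedes it below -/
import Mathlib

section
/- Let M ∈ ℝ^{q×q} and b ∈ ℝ^q, and consider the affine ODE ẋ(t) = Mx(t) + b, t ≥ 0. The following are equivalent: (i) for every initial condition x₀ ∈ ℝ^q, the solution x(·) with x(0) = x₀ converges exponentially to an equilibrium, i.e., there exist x∞ ∈ ℝ^q with Mx∞ + b = 0 and constants c ≥ 0, λ > 0 such that ‖x(t) − x∞‖ ≤ c·e^{−λt} for all t ≥ 0; (ii) for every initial condition x₀ ∈ ℝ^q, the solution x(·) with x(0) = x₀ converges to some limit as t → ∞. -/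
open Matrix NormedSpace Filter Set Topology

attribute [local instance] Matrix.linftyOpNormedAddCommGroup Matrix.linftyOpNormedRing
  Matrix.linftyOpNormedAlgebra Matrix.linftyOpNormedSpace

namespace Stmt3Aux

variable {q : ℕ} (M : Matrix (Fin q) (Fin q) ℝ)

noncomputable instance : CompleteSpace (Matrix (Fin q) (Fin q) ℝ) :=
  FiniteDimensional.complete ℝ _

noncomputable def Efun (t : ℝ) : Matrix (Fin q) (Fin q) ℝ := exp (t • M)

lemma hasDerivAt_Efun (t : ℝ) : HasDerivAt (Efun M) (M * Efun M t) t :=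
  hasDerivAt_exp_smul_const' M t

lemma Efun_add (a c : ℝ) : Efun M (a + c) = Efun M a * Efun M c := by
  rw [Efun, add_smul]
  exact exp_add_of_commute (((Commute.refl M).smul_left a).smul_right c)

lemma Efun_zero : Efun M 0 = 1 := by simp [Efun, exp_zero]

lemma Efun_continuous : Continuous (Efun M) :=
  continuous_iff_continuousAt.mpr fun t => (hasDerivAt_Efun M t).continuousAt

/-- mulVec by a fixed vector, as a continuous linear map in the matrix. -/
noncomputable def mulVecCLM (w : Fin q → ℝ) :
    Matrix (Fin q) (Fin q) ℝ →L[ℝ] (Fin q → ℝ) :=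
  LinearMap.toContinuousLinearMap
    { toFun := fun A => A *ᵥ w
      map_add' := fun A B => Matrix.add_mulVec A B w
      map_smul' := fun c A => Matrix.smul_mulVec c A w }

lemma hasDerivAt_Efun_mulVec (w : Fin q → ℝ) (t : ℝ) :
    HasDerivAt (fun s => Efun M s *ᵥ w) (M *ᵥ (Efun M t *ᵥ w)) t := by
  have h := (mulVecCLM (q := q) w).hasFDerivAt.comp_hasDerivAt t (hasDerivAt_Efun M t)
  rw [Matrix.mulVec_mulVec]
  exact h

lemma matnorm_le_sum (A : Matrix (Fin q) (Fin q) ℝ) :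
    ‖A‖ ≤ ∑ k : Fin q, ∑ j : Fin q, ‖A k j‖ := by
  rw [Matrix.linfty_opNorm_def]
  have : ((Finset.univ : Finset (Fin q)).sup fun i => ∑ j, ‖A i j‖₊)
      ≤ ∑ k : Fin q, ∑ j : Fin q, ‖A k j‖₊ :=
    Finset.sup_le fun i _ =>
      Finset.single_le_sum (f := fun k => ∑ j, ‖A k j‖₊) (fun _ _ => zero_le)
        (Finset.mem_univ i)
  calc (((Finset.univ : Finset (Fin q)).sup fun i => ∑ j, ‖A i j‖₊ : NNReal) : ℝ)
      ≤ ((∑ k : Fin q, ∑ j : Fin q, ‖A k j‖₊ : NNReal) : ℝ) := by exact_mod_cast this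
    _ = ∑ k : Fin q, ∑ j : Fin q, ‖A k j‖ := by push_cast; rfl

/-- Uniqueness for the homogeneous linear ODE. -/
lemma sol_eq (z : ℝ → Fin q → ℝ) (hz : ∀ t, 0 ≤ t → HasDerivAt z (M *ᵥ z t) t) :
    ∀ t, 0 ≤ t → z t = Efun M t *ᵥ z 0 := by
  intro T hT
  have key : Set.EqOn z (fun s => Efun M s *ᵥ z 0) (Set.Icc 0 T) := by
    apply ODE_solution_unique (v := fun _ y => M *ᵥ y)
      (K := ‖LinearMap.toContinuousLinearMap (Matrix.mulVecLin M)‖₊)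
    · intro _
      exact (LinearMap.toContinuousLinearMap (Matrix.mulVecLin M)).lipschitz
    · intro s hs
      exact (hz s hs.1).continuousAt.continuousWithinAt
    · intro s hs
      exact (hz s hs.1).hasDerivWithinAt
    · intro s _
      exact (hasDerivAt_Efun_mulVec M (z 0) s).continuousAt.continuousWithinAt
    · intro s _
      exact (hasDerivAt_Efun_mulVec M (z 0) s).hasDerivWithinAt
    · simp [Efun_zero, Matrix.one_mulVec]
  exact key ⟨hT, le_rfl⟩

/-- semigroup property of `Efun - P`. -/
lemma S_semigroup (P : Matrix (Fin q) (Fin q) ℝ)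
    (hEP : ∀ s, Efun M s * P = P) (hPE : ∀ s, P * Efun M s = P) (hPP : P * P = P)
    (a c : ℝ) : Efun M (a + c) - P = (Efun M a - P) * (Efun M c - P) := by
  have : (Efun M a - P) * (Efun M c - P)
      = Efun M a * Efun M c - Efun M a * P - (P * Efun M c - P * P) := by
    rw [sub_mul, mul_sub, mul_sub]
  rw [this, hEP a, hPE c, hPP, ← Efun_add]
  abel

lemma S_bound (P : Matrix (Fin q) (Fin q) ℝ)
    (hEP : ∀ s, Efun M s * P = P) (hPE : ∀ s, P * Efun M s = P) (hPP : P * P = P)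
    (t0 C : ℝ) (ht0half : ‖Efun M t0 - P‖ ≤ 1 / 2)
    (hC : ∀ r, 0 ≤ r → r ≤ t0 → ‖Efun M r - P‖ ≤ C) :
    ∀ n : ℕ, ∀ r, 0 ≤ r → r ≤ t0 →
      ‖Efun M ((n : ℝ) * t0 + r) - P‖ ≤ (1 / 2) ^ n * C := by
  intro n
  induction n with
  | zero => intro r h1 h2; simpa using hC r h1 h2
  | succ n ih =>
    intro r h1 h2
    have harg : ((n + 1 : ℕ) : ℝ) * t0 + r = t0 + ((n : ℝ) * t0 + r) := by push_cast; ring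
    rw [harg, S_semigroup M P hEP hPE hPP]
    calc ‖(Efun M t0 - P) * (Efun M ((n : ℝ) * t0 + r) - P)‖
        ≤ ‖Efun M t0 - P‖ * ‖Efun M ((n : ℝ) * t0 + r) - P‖ := norm_mul_le _ _
      _ ≤ (1 / 2) * ((1 / 2) ^ n * C) :=
          mul_le_mul ht0half (ih r h1 h2) (norm_nonneg _) (by norm_num)
      _ = (1 / 2) ^ (n + 1) * C := by ring

end Stmt3Aux

open Stmt3Aux

theorem stmt_3 (q : ℕ) (M : Matrix (Fin q) (Fin q) ℝ) (b : Fin q → ℝ) :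
    (∀ x : ℝ → (Fin q → ℝ),
        (∀ t : ℝ, 0 ≤ t →
          ∀ k : Fin q, HasDerivAt (fun s => x s k) (M.mulVec (x t) k + b k) t) →
        ∃ xinf : Fin q → ℝ, M.mulVec xinf + b = 0 ∧
          ∃ c : ℝ, 0 ≤ c ∧ ∃ lam : ℝ, 0 < lam ∧
            ∀ t : ℝ, 0 ≤ t → ‖x t - xinf‖ ≤ c * Real.exp (-lam * t)) ↔
    (∀ x : ℝ → (Fin q → ℝ),
        (∀ t : ℝ, 0 ≤ t →
          ∀ k : Fin q, HasDerivAt (fun s => x s k) (M.mulVec (x t) k + b k) t) →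
        ∃ xinf : Fin q → ℝ, Filter.Tendsto x Filter.atTop (nhds xinf)) := by
  constructor
  · -- easy direction
    intro H x hx
    obtain ⟨xinf, _, c, _, lam, hlam, hb⟩ := H x hx
    refine ⟨xinf, ?_⟩
    rw [tendsto_iff_norm_sub_tendsto_zero]
    have h0 : Tendsto (fun t : ℝ => c * Real.exp (-lam * t)) atTop (𝓝 0) := by
      have h1 : Tendsto (fun t : ℝ => -lam * t) atTop atBot := by
        have h2 : Tendsto (fun t : ℝ => lam * t) atTop atTop :=
          Tendsto.const_mul_atTop hlam tendsto_id
        have h3 := tendsto_neg_atTop_atBot.comp h2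
        refine h3.congr fun t => ?_
        simp [Function.comp, neg_mul]
      have := (Real.tendsto_exp_atBot.comp h1).const_mul c
      simpa using this
    apply squeeze_zero' (f := fun t => ‖x t - xinf‖) ?_ ?_ h0
    · filter_upwards [eventually_ge_atTop (0 : ℝ)] with t _
      exact norm_nonneg _
    · filter_upwards [eventually_ge_atTop (0 : ℝ)] with t ht
      exact hb t ht
  · -- hard direction
    intro H x hx
    have hx' : ∀ t, 0 ≤ t → HasDerivAt x (M *ᵥ x t + b) t := fun t ht =>
      hasDerivAt_pi.mpr fun k => hx t ht k
    obtain ⟨xinf, hxinf⟩ := H x hx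
    -- xinf is an equilibrium
    have heq : M *ᵥ xinf + b = 0 := by
      funext k
      have hmvt : ∀ n : ℕ, ∃ ξ ∈ Set.Ioo (n : ℝ) ((n : ℝ) + 1),
          (M *ᵥ x ξ) k + b k = (x ((n : ℝ) + 1) k - x (n : ℝ) k) / (((n : ℝ) + 1) - n) := by
        intro n
        exact exists_hasDerivAt_eq_slope (fun s => x s k) (fun s => (M *ᵥ x s) k + b k)
          (by linarith [n.cast_nonneg (α := ℝ)])
          (fun s hs => (hx s (le_trans n.cast_nonneg hs.1) k).continuousAt.continuousWithinAt)
          (fun s hs => hx s (le_of_lt (lt_of_le_of_lt n.cast_nonneg hs.1)) k)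
      choose ξ hξmem hξeq using hmvt
      have hξtop : Tendsto ξ atTop atTop :=
        tendsto_atTop_mono (fun n => (hξmem n).1.le) tendsto_natCast_atTop_atTop
      have hcont : Continuous fun v : Fin q → ℝ => (M *ᵥ v) k + b k := by
        have h1 : Continuous fun v : Fin q → ℝ => (M *ᵥ v) k := by
          simp only [Matrix.mulVec, dotProduct]
          exact continuous_finset_sum _ fun j _ => continuous_const.mul (continuous_apply j)
        exact h1.add continuous_const
      have h1 : Tendsto (fun n => (M *ᵥ x (ξ n)) k + b k) atTop
          (𝓝 ((M *ᵥ xinf) k + b k)) :=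
        (hcont.tendsto xinf).comp (hxinf.comp hξtop)
      have h2 : Tendsto (fun n : ℕ => (x ((n : ℝ) + 1) k - x (n : ℝ) k) / (((n : ℝ) + 1) - n))
          atTop (𝓝 0) := by
        have hxa : Tendsto (fun n : ℕ => x ((n : ℝ) + 1) k) atTop (𝓝 (xinf k)) :=
          (tendsto_pi_nhds.1
            (hxinf.comp (tendsto_atTop_add_const_right atTop 1 tendsto_natCast_atTop_atTop))) k
        have hxb : Tendsto (fun n : ℕ => x (n : ℝ) k) atTop (𝓝 (xinf k)) :=
          (tendsto_pi_nhds.1 (hxinf.comp tendsto_natCast_atTop_atTop)) k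
        have := hxa.sub hxb
        simpa [add_sub_cancel_left] using this
      have hval := tendsto_nhds_unique (h1.congr hξeq) h2
      simpa using hval
    -- the shifted solution
    have hz' : ∀ t, 0 ≤ t → HasDerivAt (fun s => x s - xinf) (M *ᵥ (x t - xinf)) t := by
      intro t ht
      have h1 := (hx' t ht).sub_const xinf
      have h2 : M *ᵥ (x t - xinf) = M *ᵥ x t + b := by
        have h3 : M *ᵥ xinf = -b := eq_neg_of_add_eq_zero_left heq
        rw [Matrix.mulVec_sub, h3, sub_neg_eq_add]
      rwa [h2]
    have hzrep : ∀ t, 0 ≤ t → x t - xinf = Efun M t *ᵥ (x 0 - xinf) :=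
      sol_eq M (fun s => x s - xinf) hz'
    -- every homogeneous trajectory converges
    have hEw : ∀ w : Fin q → ℝ, ∃ l, Tendsto (fun t => Efun M t *ᵥ w) atTop (𝓝 l) := by
      intro w
      have hy : ∀ t, 0 ≤ t → ∀ k : Fin q,
          HasDerivAt (fun s => (fun u => Efun M u *ᵥ w + x u) s k)
            ((M *ᵥ ((fun u => Efun M u *ᵥ w + x u) t)) k + b k) t := by
        intro t ht k
        have h1 := hasDerivAt_pi.1 (hasDerivAt_Efun_mulVec M w t) k
        have h2 := hx t ht k
        have h3 := h1.add h2
        have h4 : (M *ᵥ (Efun M t *ᵥ w + x t)) k + b k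
            = (M *ᵥ (Efun M t *ᵥ w)) k + ((M *ᵥ x t) k + b k) := by
          rw [Matrix.mulVec_add]; simp [Pi.add_apply]; ring
        rw [h4]
        exact h3
      obtain ⟨l, hl⟩ := H _ hy
      refine ⟨l - xinf, ?_⟩
      have := hl.sub hxinf
      simpa using this
    -- entrywise limit matrix P
    have hEntry : ∀ k j : Fin q, ∃ p : ℝ, Tendsto (fun t => Efun M t k j) atTop (𝓝 p) := by
      intro k j
      obtain ⟨l, hl⟩ := hEw (Pi.single j 1)
      refine ⟨l k, ?_⟩
      have := tendsto_pi_nhds.1 hl k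
      simpa [Matrix.mulVec_single] using this
    choose Pm hPm using hEntry
    set P : Matrix (Fin q) (Fin q) ℝ := Matrix.of Pm with hPdef
    have hPapp : ∀ k j, P k j = Pm k j := fun _ _ => rfl
    -- P absorbs Efun on both sides
    have hPE : ∀ s, P * Efun M s = P := by
      intro s
      ext k j
      have hA : Tendsto (fun u => Efun M (u + s) k j) atTop (𝓝 (Pm k j)) :=
        (hPm k j).comp (tendsto_atTop_add_const_right atTop s tendsto_id)
      have hB : Tendsto (fun u => Efun M (u + s) k j) atTop (𝓝 ((P * Efun M s) k j)) := by
        have hform : ∀ u, Efun M (u + s) k j = ∑ m, Efun M u k m * Efun M s m j := by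
          intro u; rw [Efun_add, Matrix.mul_apply]
        rw [Matrix.mul_apply]
        simp only [hform]
        exact tendsto_finset_sum _ fun m _ => (hPm k m).mul_const _
      exact tendsto_nhds_unique hB hA
    have hEP : ∀ s, Efun M s * P = P := by
      intro s
      ext k j
      have hA : Tendsto (fun u => Efun M (s + u) k j) atTop (𝓝 (Pm k j)) :=
        (hPm k j).comp (tendsto_atTop_add_const_left atTop s tendsto_id)
      have hB : Tendsto (fun u => Efun M (s + u) k j) atTop (𝓝 ((Efun M s * P) k j)) := by
        have hform : ∀ u, Efun M (s + u) k j = ∑ m, Efun M s k m * Efun M u m j := by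
          intro u; rw [Efun_add, Matrix.mul_apply]
        rw [Matrix.mul_apply]
        simp only [hform]
        exact tendsto_finset_sum _ fun m _ => (hPm m j).const_mul _
      exact tendsto_nhds_unique hB hA
    have hPP : P * P = P := by
      ext k j
      have hA : Tendsto (fun u : ℝ => (P * Efun M u) k j) atTop (𝓝 ((P * P) k j)) := by
        simp only [Matrix.mul_apply]
        exact tendsto_finset_sum _ fun m _ => (hPm m j).const_mul _
      have hB : Tendsto (fun u : ℝ => (P * Efun M u) k j) atTop (𝓝 (P k j)) := by
        simp only [hPE]
        exact tendsto_const_nhds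
      exact tendsto_nhds_unique hA hB
    -- the norm of Efun - P tends to zero
    have hSnorm0 : Tendsto (fun t => ‖Efun M t - P‖) atTop (𝓝 0) := by
      have hsum : Tendsto (fun t => ∑ k : Fin q, ∑ j : Fin q, ‖(Efun M t - P) k j‖)
          atTop (𝓝 0) := by
        have h0 : ∀ k j : Fin q, Tendsto (fun t => ‖(Efun M t - P) k j‖) atTop (𝓝 0) := by
          intro k j
          have := ((hPm k j).sub (tendsto_const_nhds (x := Pm k j))).norm
          simpa [Matrix.sub_apply, hPapp] using this
        have := tendsto_finset_sum (Finset.univ : Finset (Fin q))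
          (fun k _ => tendsto_finset_sum (Finset.univ : Finset (Fin q)) fun j _ => h0 k j)
        simpa using this
      exact squeeze_zero (fun t => norm_nonneg _) (fun t => matnorm_le_sum _) hsum
    -- pick t0
    obtain ⟨t0, ht0pos, ht0half⟩ : ∃ t0 : ℝ, 0 < t0 ∧ ‖Efun M t0 - P‖ ≤ 1 / 2 := by
      have h1 : ∀ᶠ t : ℝ in atTop, ‖Efun M t - P‖ < 1 / 2 :=
        hSnorm0.eventually_lt_const (by norm_num)
      obtain ⟨t0, h2, h3⟩ := (h1.and (eventually_gt_atTop 0)).exists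
      exact ⟨t0, h3, h2.le⟩
    -- bound on the compact interval
    have hScont : Continuous fun t => Efun M t - P := (Efun_continuous M).sub continuous_const
    obtain ⟨C, hC⟩ := (isCompact_Icc (a := (0:ℝ)) (b := t0)).exists_bound_of_continuousOn
      hScont.continuousOn
    have hC0 : 0 ≤ C := le_trans (norm_nonneg _) (hC 0 ⟨le_rfl, ht0pos.le⟩)
    -- P kills x 0 - xinf
    have hP0 : P *ᵥ (x 0 - xinf) = 0 := by
      have hzl : Tendsto (fun u => Efun M u *ᵥ (x 0 - xinf)) atTop (𝓝 0) := by
        have hz0 : Tendsto (fun u => x u - xinf) atTop (𝓝 0) := by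
          have := hxinf.sub (tendsto_const_nhds (x := xinf))
          simpa using this
        apply hz0.congr'
        filter_upwards [eventually_ge_atTop (0 : ℝ)] with u hu
        exact hzrep u hu
      have hto : Tendsto (fun u => Efun M u *ᵥ (x 0 - xinf)) atTop
          (𝓝 (P *ᵥ (x 0 - xinf))) := by
        rw [tendsto_pi_nhds]
        intro k
        simp only [Matrix.mulVec, dotProduct]
        exact tendsto_finset_sum _ fun j _ => (hPm k j).mul_const _
      exact tendsto_nhds_unique hto hzl
    -- final exponential bound
    refine ⟨xinf, heq, 2 * C * ‖x 0 - xinf‖, by positivity, Real.log 2 / t0,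
      div_pos (Real.log_pos one_lt_two) ht0pos, ?_⟩
    intro t ht
    set n : ℕ := ⌊t / t0⌋₊ with hn
    set r : ℝ := t - n * t0 with hr
    have hfl : t / t0 < (n : ℝ) + 1 := Nat.lt_floor_add_one _
    have hn1 : (n : ℝ) * t0 ≤ t := by
      have h1 : (n : ℝ) ≤ t / t0 := Nat.floor_le (div_nonneg ht ht0pos.le)
      calc (n : ℝ) * t0 ≤ (t / t0) * t0 := mul_le_mul_of_nonneg_right h1 ht0pos.le
        _ = t := div_mul_cancel₀ t ht0pos.ne'
    have hn2 : t < ((n : ℝ) + 1) * t0 := by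
      calc t = (t / t0) * t0 := (div_mul_cancel₀ t ht0pos.ne').symm
        _ < ((n : ℝ) + 1) * t0 := mul_lt_mul_of_pos_right hfl ht0pos
    have hr0 : 0 ≤ r := by rw [hr]; linarith
    have hrt0 : r ≤ t0 := by rw [hr]; nlinarith
    have hSt : ‖Efun M t - P‖ ≤ (1 / 2) ^ n * C := by
      have ht' : t = (n : ℝ) * t0 + r := by rw [hr]; ring
      rw [ht']
      exact S_bound M P hEP hPE hPP t0 C ht0half (fun s h1 h2 => hC s ⟨h1, h2⟩) n r hr0 hrt0
    have hpow : ((1 : ℝ) / 2) ^ n ≤ 2 * Real.exp (-(Real.log 2 / t0) * t) := by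
      have h12 : ((1 / 2 : ℝ)) ^ n = Real.exp ((n : ℝ) * (-Real.log 2)) := by
        rw [Real.exp_nat_mul, Real.exp_neg, Real.exp_log two_pos]; norm_num
      have h2e : 2 * Real.exp (-(Real.log 2 / t0) * t)
          = Real.exp (Real.log 2 + -(Real.log 2 / t0) * t) := by
        rw [Real.exp_add, Real.exp_log two_pos]
      rw [h12, h2e]
      apply Real.exp_le_exp.mpr
      have hlog : 0 ≤ Real.log 2 := Real.log_nonneg one_le_two
      have hu : Real.log 2 / t0 * t = Real.log 2 * (t / t0) := by ring
      rw [neg_mul, hu]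
      nlinarith [mul_le_mul_of_nonneg_right hfl.le hlog]
    have hzS : x t - xinf = (Efun M t - P) *ᵥ (x 0 - xinf) := by
      rw [Matrix.sub_mulVec, hP0, sub_zero]
      exact hzrep t ht
    rw [hzS]
    calc ‖(Efun M t - P) *ᵥ (x 0 - xinf)‖
        ≤ ‖Efun M t - P‖ * ‖x 0 - xinf‖ := Matrix.linfty_opNorm_mulVec _ _
      _ ≤ ((1 / 2) ^ n * C) * ‖x 0 - xinf‖ :=
          mul_le_mul_of_nonneg_right hSt (norm_nonneg _)
      _ ≤ (2 * Real.exp (-(Real.log 2 / t0) * t) * C) * ‖x 0 - xinf‖ :=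
          mul_le_mul_of_nonneg_right (mul_le_mul_of_nonneg_right hpow hC0) (norm_nonneg _)
      _ = 2 * C * ‖x 0 - xinf‖ * Real.exp (-(Real.log 2 / t0) * t) := by ring
end

section
/- In the RCC structure, a matrix X* ∈ ℝ^{r×p} is a least squares solution to AXB = F if and only if, setting Y* = AX* ∈ ℝ^{m×p}, the tuple (X₁,…,Xₙ,Y₁,…,Yₙ) = (X*,…,X*,Y*,…,Y*) is an optimal solution of problem (RCC-opt), i.e., it is feasible and attains the minimum of the objective over the feasible set. -/
open Matrix

/-- Squared Frobenius norm of a real matrix: `‖M‖_F² = tr (Mᵀ M)`. -/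
noncomputable def frobSq {α β : Type*} [Fintype α] [Fintype β] (M : Matrix α β ℝ) : ℝ :=
  Matrix.trace (Mᵀ * M)

/-- Frobenius inner product of real matrices: `⟨M,N⟩_F = tr (Mᵀ N)`. -/
noncomputable def frobInner {α β : Type*} [Fintype α] [Fintype β] (M N : Matrix α β ℝ) : ℝ :=
  Matrix.trace (Mᵀ * N)

/-- The weighted undirected graph with adjacency matrix `a` is connected: any two nodes are
joined by a path of adjacent nodes (nodes `u ≠ v` are adjacent iff `a u v > 0`). -/
def GraphConnected {n : ℕ} (a : Matrix (Fin n) (Fin n) ℝ) : Prop :=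
  ∀ i j : Fin n, Relation.ReflTransGen (fun u v : Fin n => u ≠ v ∧ 0 < a u v) i j

/-- Assemble a family of row blocks `M i ∈ ℝ^{d i × β}` into one matrix. -/
def blockRows {n : ℕ} {d : Fin n → ℕ} {β : Type*} (M : ∀ i, Matrix (Fin (d i)) β ℝ) :
    Matrix ((i : Fin n) × Fin (d i)) β ℝ :=
  Matrix.of fun s j => M s.1 s.2 j

/-- Assemble a family of column blocks `M i ∈ ℝ^{α × d i}` into one matrix. -/
def blockCols {n : ℕ} {d : Fin n → ℕ} {α : Type*} (M : ∀ i, Matrix α (Fin (d i)) ℝ) :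
    Matrix α ((i : Fin n) × Fin (d i)) ℝ :=
  Matrix.of fun k s => M s.1 k s.2

/-- The `i`-th row block of a matrix whose rows are partitioned according to `d`. -/
def rowBlk {n : ℕ} {d : Fin n → ℕ} {β : Type*}
    (Y : Matrix ((i : Fin n) × Fin (d i)) β ℝ) (i : Fin n) :
    Matrix (Fin (d i)) β ℝ :=
  Matrix.of fun k j => Y ⟨i, k⟩ j

/-- `[M]_R`: the matrix whose `i`-th row block is `M` and whose other row blocks are zero. -/
def embedRow {n : ℕ} {d : Fin n → ℕ} {β : Type*} (i : Fin n)
    (M : Matrix (Fin (d i)) β ℝ) :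
    Matrix ((i' : Fin n) × Fin (d i')) β ℝ :=
  Matrix.of fun s j => if h : s.1 = i then M (Fin.cast (congrArg d h) s.2) j else 0

/-- `[M]_C`: the matrix whose `i`-th column block is `M` and whose other column blocks are zero. -/
def embedCol {n : ℕ} {d : Fin n → ℕ} {α : Type*} (i : Fin n)
    (M : Matrix α (Fin (d i)) ℝ) :
    Matrix α ((i' : Fin n) × Fin (d i')) ℝ :=
  Matrix.of fun k s => if h : s.1 = i then M k (Fin.cast (congrArg d h) s.2) else 0

/-- Feasibility for problem (RCC-opt): consensus of the `X_i` and `Y_i`, and the local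
constraints `A_{vi} X_i = Y_i^{vi}`. -/
def RCCfeas {n r p : ℕ} {mdim : Fin n → ℕ}
    (Av : ∀ i, Matrix (Fin (mdim i)) (Fin r) ℝ)
    (X : Fin n → Matrix (Fin r) (Fin p) ℝ)
    (Y : Fin n → Matrix ((i : Fin n) × Fin (mdim i)) (Fin p) ℝ) : Prop :=
  (∀ i j, X i = X j) ∧ (∀ i j, Y i = Y j) ∧ (∀ i, Av i * X i = rowBlk (Y i) i)

/-- Objective of problem (RCC-opt): `Σ_i ‖Y_i B_{li} − F_{li}‖_F²`. -/
noncomputable def RCCobj {n p : ℕ} {mdim qdim : Fin n → ℕ}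
    (Bl : ∀ i, Matrix (Fin p) (Fin (qdim i)) ℝ)
    (Fl : ∀ i, Matrix ((i' : Fin n) × Fin (mdim i')) (Fin (qdim i)) ℝ)
    (Y : Fin n → Matrix ((i : Fin n) × Fin (mdim i)) (Fin p) ℝ) : ℝ :=
  ∑ i, frobSq (Y i * Bl i - Fl i)


lemma rowBlk_blockRows_mul {n r p : ℕ} {mdim : Fin n → ℕ}
    (Av : ∀ i, Matrix (Fin (mdim i)) (Fin r) ℝ) (X : Matrix (Fin r) (Fin p) ℝ) (i : Fin n) :
    rowBlk (blockRows Av * X) i = Av i * X := by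
  ext k j
  simp [rowBlk, blockRows, Matrix.mul_apply]

lemma colSplit {n p : ℕ} {mdim qdim : Fin n → ℕ}
    (Bl : ∀ i, Matrix (Fin p) (Fin (qdim i)) ℝ)
    (Fl : ∀ i, Matrix ((i' : Fin n) × Fin (mdim i')) (Fin (qdim i)) ℝ)
    (Y : Matrix ((i : Fin n) × Fin (mdim i)) (Fin p) ℝ) :
    frobSq (Y * blockCols Bl - blockCols Fl) = ∑ i, frobSq (Y * Bl i - Fl i) := by
  unfold frobSq
  simp only [Matrix.trace, Matrix.diag_apply, Matrix.mul_apply, Matrix.transpose_apply,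
    Matrix.sub_apply, blockCols, Matrix.of_apply]
  rw [← Finset.univ_sigma_univ, Finset.sum_sigma]

theorem stmt_4 (n r p : ℕ) (mdim qdim : Fin n → ℕ)
    (Av : ∀ i, Matrix (Fin (mdim i)) (Fin r) ℝ)
    (Bl : ∀ i, Matrix (Fin p) (Fin (qdim i)) ℝ)
    (Fl : ∀ i, Matrix ((i' : Fin n) × Fin (mdim i')) (Fin (qdim i)) ℝ)
    (Xs : Matrix (Fin r) (Fin p) ℝ) :
    (∀ X : Matrix (Fin r) (Fin p) ℝ,
        frobSq (blockRows Av * Xs * blockCols Bl - blockCols Fl) ≤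
          frobSq (blockRows Av * X * blockCols Bl - blockCols Fl)) ↔
      (RCCfeas Av (fun _ => Xs) (fun _ => blockRows Av * Xs) ∧
        ∀ X' : Fin n → Matrix (Fin r) (Fin p) ℝ,
          ∀ Y' : Fin n → Matrix ((i : Fin n) × Fin (mdim i)) (Fin p) ℝ,
            RCCfeas Av X' Y' →
              RCCobj Bl Fl (fun _ => blockRows Av * Xs) ≤ RCCobj Bl Fl Y') := by
  constructor
  · intro hmin
    have hfeas : RCCfeas Av (fun _ => Xs) (fun _ => blockRows Av * Xs) :=
      ⟨fun _ _ => rfl, fun _ _ => rfl, fun i => (rowBlk_blockRows_mul Av Xs i).symm⟩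
    refine ⟨hfeas, ?_⟩
    intro X' Y' hF
    rcases Nat.eq_zero_or_pos n with hn | hn
    · subst hn
      simp [RCCobj]
    · set i0 : Fin n := ⟨0, hn⟩
      have hYall : ∀ i, Y' i = blockRows Av * X' i0 := by
        intro i
        rw [hF.2.1 i i0]
        ext ⟨j, k⟩ l
        have h1 : Y' i0 ⟨j, k⟩ l = rowBlk (Y' j) j k l := by
          rw [hF.2.1 i0 j]; rfl
        rw [h1, ← hF.2.2 j, hF.1 j i0]
        simp [blockRows, Matrix.mul_apply]
      have hobj : RCCobj Bl Fl Y' =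
          frobSq (blockRows Av * X' i0 * blockCols Bl - blockCols Fl) := by
        rw [colSplit]
        unfold RCCobj
        refine Finset.sum_congr rfl fun i _ => ?_
        rw [hYall i, Matrix.mul_assoc]
      have hobj2 : RCCobj Bl Fl (fun _ => blockRows Av * Xs) =
          frobSq (blockRows Av * Xs * blockCols Bl - blockCols Fl) := by
        rw [colSplit]
        unfold RCCobj
        refine Finset.sum_congr rfl fun i _ => ?_
        rw [Matrix.mul_assoc]
      rw [hobj, hobj2]
      exact hmin (X' i0)
  · rintro ⟨-, hmin⟩ X
    have hfeasX : RCCfeas Av (fun _ => X) (fun _ => blockRows Av * X) :=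
      ⟨fun _ _ => rfl, fun _ _ => rfl, fun i => (rowBlk_blockRows_mul Av X i).symm⟩
    have := hmin (fun _ => X) (fun _ => blockRows Av * X) hfeasX
    have e1 : RCCobj Bl Fl (fun _ => blockRows Av * Xs) =
        frobSq (blockRows Av * Xs * blockCols Bl - blockCols Fl) := by
      rw [colSplit]; unfold RCCobj
      exact Finset.sum_congr rfl fun i _ => by rw [Matrix.mul_assoc]
    have e2 : RCCobj Bl Fl (fun _ => blockRows Av * X) =
        frobSq (blockRows Av * X * blockCols Bl - blockCols Fl) := by
      rw [colSplit]; unfold RCCobj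
      exact Finset.sum_congr rfl fun i _ => by rw [Matrix.mul_assoc]
    rw [e1, e2] at this
    exact this
end

section
/- Suppose the weighted undirected graph a on n nodes is connected. A tuple (X₁*,…,Xₙ*,Y₁*,…,Yₙ*) is an optimal solution of problem (RCC-opt) if and only if there exist Λ¹_i* ∈ ℝ^{r×p}, Λ²_i* ∈ ℝ^{m×p}, Λ³_i* ∈ ℝ^{m_i×p} (i = 1,…,n) such that (X*,Y*,Λ¹*,Λ²*,Λ³*) is an equilibrium of algorithm (RCC-alg), i.e., all the right-hand sides of (RCC-alg) vanish at this point. -/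
open Matrix

/-- Right-hand side of the `X_i`-equation in algorithm (RCC-alg). -/
noncomputable def RCCrhsX {n r p : ℕ} {mdim : Fin n → ℕ}
    (a : Matrix (Fin n) (Fin n) ℝ)
    (Av : ∀ i, Matrix (Fin (mdim i)) (Fin r) ℝ)
    (X : Fin n → Matrix (Fin r) (Fin p) ℝ)
    (Y : Fin n → Matrix ((i : Fin n) × Fin (mdim i)) (Fin p) ℝ)
    (L1 : Fin n → Matrix (Fin r) (Fin p) ℝ)
    (L3 : ∀ i, Matrix (Fin (mdim i)) (Fin p) ℝ) (i : Fin n) :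
    Matrix (Fin r) (Fin p) ℝ :=
  -((Av i)ᵀ * (Av i * X i - rowBlk (Y i) i)) - (Av i)ᵀ * L3 i
    - ∑ j, a i j • (L1 i - L1 j) - ∑ j, a i j • (X i - X j)

/-- Right-hand side of the `Y_i`-equation in algorithm (RCC-alg). -/
noncomputable def RCCrhsY {n r p : ℕ} {mdim qdim : Fin n → ℕ}
    (a : Matrix (Fin n) (Fin n) ℝ)
    (Av : ∀ i, Matrix (Fin (mdim i)) (Fin r) ℝ)
    (Bl : ∀ i, Matrix (Fin p) (Fin (qdim i)) ℝ)
    (Fl : ∀ i, Matrix ((i' : Fin n) × Fin (mdim i')) (Fin (qdim i)) ℝ)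
    (X : Fin n → Matrix (Fin r) (Fin p) ℝ)
    (Y : Fin n → Matrix ((i : Fin n) × Fin (mdim i)) (Fin p) ℝ)
    (L2 : Fin n → Matrix ((i : Fin n) × Fin (mdim i)) (Fin p) ℝ)
    (L3 : ∀ i, Matrix (Fin (mdim i)) (Fin p) ℝ) (i : Fin n) :
    Matrix ((i' : Fin n) × Fin (mdim i')) (Fin p) ℝ :=
  -((Y i * Bl i - Fl i) * (Bl i)ᵀ) + embedRow i (L3 i)
    + embedRow i (Av i * X i - rowBlk (Y i) i)
    - ∑ j, a i j • (Y i - Y j) - ∑ j, a i j • (L2 i - L2 j)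

/-- Right-hand side of the `Λ¹_i`-equation in algorithm (RCC-alg). -/
noncomputable def RCCrhsL1 {n r p : ℕ}
    (a : Matrix (Fin n) (Fin n) ℝ)
    (X : Fin n → Matrix (Fin r) (Fin p) ℝ) (i : Fin n) :
    Matrix (Fin r) (Fin p) ℝ :=
  ∑ j, a i j • (X i - X j)

/-- Right-hand side of the `Λ²_i`-equation in algorithm (RCC-alg). -/
noncomputable def RCCrhsL2 {n p : ℕ} {mdim : Fin n → ℕ}
    (a : Matrix (Fin n) (Fin n) ℝ)
    (Y : Fin n → Matrix ((i : Fin n) × Fin (mdim i)) (Fin p) ℝ) (i : Fin n) :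
    Matrix ((i' : Fin n) × Fin (mdim i')) (Fin p) ℝ :=
  ∑ j, a i j • (Y i - Y j)

/-- Right-hand side of the `Λ³_i`-equation in algorithm (RCC-alg). -/
noncomputable def RCCrhsL3 {n r p : ℕ} {mdim : Fin n → ℕ}
    (Av : ∀ i, Matrix (Fin (mdim i)) (Fin r) ℝ)
    (X : Fin n → Matrix (Fin r) (Fin p) ℝ)
    (Y : Fin n → Matrix ((i : Fin n) × Fin (mdim i)) (Fin p) ℝ) (i : Fin n) :
    Matrix (Fin (mdim i)) (Fin p) ℝ :=
  Av i * X i - rowBlk (Y i) i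

/-- Equilibrium of algorithm (RCC-alg): all right-hand sides vanish. -/
noncomputable def RCCequil {n r p : ℕ} {mdim qdim : Fin n → ℕ}
    (a : Matrix (Fin n) (Fin n) ℝ)
    (Av : ∀ i, Matrix (Fin (mdim i)) (Fin r) ℝ)
    (Bl : ∀ i, Matrix (Fin p) (Fin (qdim i)) ℝ)
    (Fl : ∀ i, Matrix ((i' : Fin n) × Fin (mdim i')) (Fin (qdim i)) ℝ)
    (X : Fin n → Matrix (Fin r) (Fin p) ℝ)
    (Y : Fin n → Matrix ((i : Fin n) × Fin (mdim i)) (Fin p) ℝ)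
    (L1 : Fin n → Matrix (Fin r) (Fin p) ℝ)
    (L2 : Fin n → Matrix ((i : Fin n) × Fin (mdim i)) (Fin p) ℝ)
    (L3 : ∀ i, Matrix (Fin (mdim i)) (Fin p) ℝ) : Prop :=
  ∀ i, RCCrhsX a Av X Y L1 L3 i = 0 ∧ RCCrhsY a Av Bl Fl X Y L2 L3 i = 0 ∧
    RCCrhsL1 a X i = 0 ∧ RCCrhsL2 a Y i = 0 ∧ RCCrhsL3 Av X Y i = 0

set_option maxHeartbeats 1000000
section AuxRCC
variable {α β γ : Type*} [Fintype α] [Fintype β] [Fintype γ]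

lemma frobInner_eq_sum (M N : Matrix α β ℝ) :
    frobInner M N = ∑ j, ∑ k, M k j * N k j := by
  simp [frobInner, Matrix.trace, Matrix.diag, Matrix.mul_apply, Matrix.transpose_apply]

lemma frobSq_eq (M : Matrix α β ℝ) : frobSq M = frobInner M M := rfl

lemma frobSq_nonneg (M : Matrix α β ℝ) : 0 ≤ frobSq M := by
  rw [frobSq_eq, frobInner_eq_sum]
  apply Finset.sum_nonneg; intro j _
  apply Finset.sum_nonneg; intro k _
  exact mul_self_nonneg _

lemma frobInner_self_eq_zero {M : Matrix α β ℝ} (h : frobInner M M = 0) : M = 0 := by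
  rw [frobInner_eq_sum] at h
  ext k j
  have h1 : ∀ j ∈ Finset.univ, (0:ℝ) ≤ ∑ k, M k j * M k j := by
    intro j _
    apply Finset.sum_nonneg; intro k _; exact mul_self_nonneg _
  have h2 := (Finset.sum_eq_zero_iff_of_nonneg h1).1 h j (Finset.mem_univ j)
  have h3 : ∀ k ∈ Finset.univ, (0:ℝ) ≤ M k j * M k j := by
    intro k _; exact mul_self_nonneg _
  have h4 := (Finset.sum_eq_zero_iff_of_nonneg h3).1 h2 k (Finset.mem_univ k)
  have := mul_self_eq_zero.1 h4
  simpa using this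

lemma frobSq_add (M N : Matrix α β ℝ) :
    frobSq (M + N) = frobSq M + 2 * frobInner M N + frobSq N := by
  simp only [frobSq_eq, frobInner_eq_sum, Matrix.add_apply]
  have h : ∀ (j:β) (k:α), (M k j + N k j)*(M k j + N k j)
      = M k j*M k j + 2*(M k j*N k j) + N k j*N k j := by intros; ring
  simp only [h, Finset.sum_add_distrib, Finset.mul_sum]


lemma frobInner_mul_right (P : Matrix α γ ℝ) (Q : Matrix α β ℝ) (B : Matrix β γ ℝ) :
    frobInner P (Q * B) = frobInner (P * Bᵀ) Q := by
  unfold frobInner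
  rw [Matrix.transpose_mul, Matrix.transpose_transpose, ← Matrix.mul_assoc,
    Matrix.trace_mul_comm, ← Matrix.mul_assoc]

lemma frobInner_matmul_left (A : Matrix α β ℝ) (P : Matrix α γ ℝ) (E : Matrix β γ ℝ) :
    frobInner P (A * E) = frobInner (Aᵀ * P) E := by
  unfold frobInner
  rw [Matrix.transpose_mul, Matrix.transpose_transpose, ← Matrix.mul_assoc]

lemma frobInner_sum_left {ι : Type*} (s : Finset ι) (M : ι → Matrix α β ℝ) (N : Matrix α β ℝ) :
    frobInner (∑ i ∈ s, M i) N = ∑ i ∈ s, frobInner (M i) N := by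
  simp [frobInner, Matrix.transpose_sum, Matrix.sum_mul, Matrix.trace_sum]

lemma frobInner_zero_left (N : Matrix α β ℝ) : frobInner 0 N = 0 := by
  simp [frobInner_eq_sum]

lemma quad_coeff_zero (c d : ℝ) (hd : 0 ≤ d) (h : ∀ t : ℝ, 0 ≤ c * t + d * t ^ 2) : c = 0 := by
  by_contra hc
  have h1 := h (-c / (2 * (d + 1)))
  have hd1 : (0:ℝ) < d + 1 := by linarith
  have hc2 : 0 < c ^ 2 := by positivity
  have e : -c / (2 * (d + 1)) * (2 * (d + 1)) = -c := by field_simp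
  nlinarith [mul_pos hd1 hd1, sq_nonneg (c + d * (-c / (2 * (d + 1))))]

section Lap
variable {n : ℕ} (a : Matrix (Fin n) (Fin n) ℝ)

lemma lap_total_sum {M : Type*} [AddCommGroup M] [Module ℝ M]
    (hsym : ∀ i j, a i j = a j i) (Z : Fin n → M) :
    ∑ i, ∑ j, a i j • (Z i - Z j) = 0 := by
  have e : ∀ i j : Fin n, a i j • (Z i - Z j) = a i j • Z i - a i j • Z j := fun i j => smul_sub _ _ _
  simp only [e, Finset.sum_sub_distrib]
  rw [sub_eq_zero]
  rw [Finset.sum_comm]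
  refine Finset.sum_congr rfl fun j _ => Finset.sum_congr rfl fun i _ => ?_
  rw [hsym i j]

lemma lap_ker_real (hsym : ∀ i j, a i j = a j i) (hnonneg : ∀ i j, 0 ≤ a i j)
    (hconn : GraphConnected a) (x : Fin n → ℝ)
    (hx : ∀ i, ∑ j, a i j * (x i - x j) = 0) : ∀ i j, x i = x j := by
  have S1 : ∑ i, ∑ j, a i j * (x i * (x i - x j)) = 0 := by
    have e : ∀ i, ∑ j, a i j * (x i * (x i - x j)) = x i * ∑ j, a i j * (x i - x j) := by
      intro i
      rw [Finset.mul_sum]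
      exact Finset.sum_congr rfl fun j _ => by ring
    simp [e, hx]
  have S2 : ∑ i, ∑ j, a i j * (x j * (x i - x j)) = 0 := by
    rw [Finset.sum_comm]
    have e : ∀ j i : Fin n, a i j * (x j * (x i - x j)) = -(a j i * (x j * (x j - x i))) := by
      intro j i; rw [hsym i j]; ring
    simp only [e, Finset.sum_neg_distrib]
    simp [S1]
  have h0 : ∑ i, ∑ j, a i j * (x i - x j) ^ 2 = 0 := by
    have e : ∀ i j : Fin n, a i j * (x i - x j) ^ 2
        = a i j * (x i * (x i - x j)) - a i j * (x j * (x i - x j)) := by intros; ring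
    simp only [e, Finset.sum_sub_distrib, S1, S2, sub_zero]
  have hterm : ∀ i j : Fin n, a i j * (x i - x j) ^ 2 = 0 := by
    have hnn : ∀ i ∈ Finset.univ, (0:ℝ) ≤ ∑ j, a i j * (x i - x j) ^ 2 := by
      intro i _
      apply Finset.sum_nonneg
      intro j _
      exact mul_nonneg (hnonneg i j) (sq_nonneg _)
    intro i j
    have h1 := (Finset.sum_eq_zero_iff_of_nonneg hnn).1 h0 i (Finset.mem_univ i)
    have hnn2 : ∀ j ∈ Finset.univ, (0:ℝ) ≤ a i j * (x i - x j) ^ 2 := by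
      intro j _; exact mul_nonneg (hnonneg i j) (sq_nonneg _)
    exact (Finset.sum_eq_zero_iff_of_nonneg hnn2).1 h1 j (Finset.mem_univ j)
  have hedge : ∀ i j : Fin n, 0 < a i j → x i = x j := by
    intro i j hpos
    have := hterm i j
    have hsq : (x i - x j) ^ 2 = 0 := by
      rcases mul_eq_zero.1 this with h | h
      · exact absurd h (ne_of_gt hpos)
      · exact h
    have h2 : x i - x j = 0 := by
      have := sq_eq_zero_iff.mp hsq
      exact this
    linarith [sub_eq_zero.1 h2]
  intro i j
  induction hconn i j with
  | refl => rfl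
  | tail _ hstep ih => exact ih.trans (hedge _ _ hstep.2)

end Lap

section LapSurj
variable {n : ℕ} (a : Matrix (Fin n) (Fin n) ℝ)

noncomputable def lapMap : (Fin n → ℝ) →ₗ[ℝ] (Fin n → ℝ) where
  toFun z := fun i => ∑ j, a i j * (z i - z j)
  map_add' x y := by
    funext i
    simp only [Pi.add_apply]
    rw [← Finset.sum_add_distrib]
    exact Finset.sum_congr rfl fun j _ => by ring
  map_smul' c z := by
    funext i
    simp only [Pi.smul_apply, smul_eq_mul, RingHom.id_apply]
    rw [Finset.mul_sum]
    exact Finset.sum_congr rfl fun j _ => by ring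

noncomputable def sumMap (n : ℕ) : (Fin n → ℝ) →ₗ[ℝ] ℝ where
  toFun z := ∑ i, z i
  map_add' x y := by simp [Finset.sum_add_distrib]
  map_smul' c z := by simp [Finset.mul_sum]

lemma lap_surj_real (hn : 0 < n) (hsym : ∀ i j, a i j = a j i) (hnonneg : ∀ i j, 0 ≤ a i j)
    (hconn : GraphConnected a) (h : Fin n → ℝ) (hsum : ∑ i, h i = 0) :
    ∃ z : Fin n → ℝ, ∀ i, ∑ j, a i j * (z i - z j) = h i := by
  set L := lapMap a with hL
  set S := sumMap n with hS
  have i0 : Fin n := ⟨0, hn⟩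
  have hrange : LinearMap.range L ≤ LinearMap.ker S := by
    rintro y ⟨z, rfl⟩
    show ∑ i, ∑ j, a i j * (z i - z j) = 0
    have := lap_total_sum a hsym z
    simpa [smul_eq_mul] using this
  have hker : LinearMap.ker L ≤ Submodule.span ℝ {(fun _ => 1 : Fin n → ℝ)} := by
    intro z hz
    have hz' : ∀ i, ∑ j, a i j * (z i - z j) = 0 := fun i => congrFun hz i
    have hcons := lap_ker_real a hsym hnonneg hconn z hz'
    rw [Submodule.mem_span_singleton]
    exact ⟨z i0, funext fun i => by simp [hcons i0 i]⟩
  have hSsurj : Function.Surjective S := by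
    intro t
    refine ⟨Pi.single i0 t, ?_⟩
    show ∑ i, Pi.single i0 t i = t
    simp
  have hfinL := LinearMap.finrank_range_add_finrank_ker L
  have hfinS := LinearMap.finrank_range_add_finrank_ker S
  have hpi : Module.finrank ℝ (Fin n → ℝ) = n := by simp
  have hkerle : Module.finrank ℝ (LinearMap.ker L) ≤ 1 := by
    have h1 : ((fun _ => 1 : Fin n → ℝ)) ≠ 0 := by
      intro h0
      have := congrFun h0 i0
      simp at this
    calc Module.finrank ℝ (LinearMap.ker L)
        ≤ Module.finrank ℝ (Submodule.span ℝ {(fun _ => 1 : Fin n → ℝ)}) :=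
          Submodule.finrank_mono hker
      _ = 1 := finrank_span_singleton h1
  have hrangeS : Module.finrank ℝ (LinearMap.range S) = 1 := by
    rw [LinearMap.range_eq_top.2 hSsurj]
    simp
  have hkerS : Module.finrank ℝ (LinearMap.ker S) = n - 1 := by omega
  have hle : Module.finrank ℝ (LinearMap.ker S) ≤ Module.finrank ℝ (LinearMap.range L) := by omega
  have heq : LinearMap.range L = LinearMap.ker S := Submodule.eq_of_le_of_finrank_le hrange hle
  have hmem : h ∈ LinearMap.range L := by rw [heq]; exact hsum
  obtain ⟨z, hz⟩ := hmem
  exact ⟨z, fun i => congrFun hz i⟩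

end LapSurj

section Blocks
variable {n : ℕ} {d : Fin n → ℕ} {β : Type*} [Fintype β]

lemma sum_embedRow_rowBlk (M : Matrix ((i : Fin n) × Fin (d i)) β ℝ) :
    ∑ i, embedRow i (rowBlk M i) = M := by
  ext s j
  obtain ⟨i, k⟩ := s
  rw [Matrix.sum_apply]
  rw [Finset.sum_eq_single i]
  · simp [embedRow, rowBlk]
  · intro i' _ hne
    simp [embedRow, hne.symm]
  · intro h; exact absurd (Finset.mem_univ i) h

lemma frobInner_sigma (M N : Matrix ((i : Fin n) × Fin (d i)) β ℝ) :
    frobInner M N = ∑ i, frobInner (rowBlk M i) (rowBlk N i) := by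
  simp only [frobInner_eq_sum, rowBlk, Matrix.of_apply]
  rw [Finset.sum_comm]
  rw [← Finset.univ_sigma_univ, Finset.sum_sigma]
  refine Finset.sum_congr rfl fun i _ => Finset.sum_comm

lemma embedRow_zero (i : Fin n) : embedRow (d := d) (β := β) i 0 = 0 := by
  ext s j
  simp [embedRow]

lemma rowBlk_eq (M N : Matrix ((i : Fin n) × Fin (d i)) β ℝ)
    (h : ∀ i, rowBlk M i = rowBlk N i) : M = N := by
  ext s j
  obtain ⟨i, k⟩ := s
  exact congrFun (congrFun (h i) k) j

end Blocks

section LapMat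
variable {n : ℕ} (a : Matrix (Fin n) (Fin n) ℝ) {α β : Type*} [Fintype α] [Fintype β]

lemma lap_ker_mat (hsym : ∀ i j, a i j = a j i) (hnonneg : ∀ i j, 0 ≤ a i j)
    (hconn : GraphConnected a) (Z : Fin n → Matrix α β ℝ)
    (hZ : ∀ i, ∑ j, a i j • (Z i - Z j) = 0) : ∀ i j, Z i = Z j := by
  intro i j
  ext k l
  refine lap_ker_real a hsym hnonneg hconn (fun i => Z i k l) ?_ i j
  intro i'
  have := congrFun (congrFun (hZ i') k) l
  simpa [Matrix.sum_apply, Matrix.smul_apply, Matrix.sub_apply, smul_eq_mul] using this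

lemma lap_surj_mat (hn : 0 < n) (hsym : ∀ i j, a i j = a j i) (hnonneg : ∀ i j, 0 ≤ a i j)
    (hconn : GraphConnected a) (H : Fin n → Matrix α β ℝ) (hsum : ∑ i, H i = 0) :
    ∃ Z : Fin n → Matrix α β ℝ, ∀ i, ∑ j, a i j • (Z i - Z j) = H i := by
  have key : ∀ (k : α) (l : β), ∃ z : Fin n → ℝ, ∀ i, ∑ j, a i j * (z i - z j) = H i k l := by
    intro k l
    refine lap_surj_real a hn hsym hnonneg hconn (fun i => H i k l) ?_
    have := congrFun (congrFun hsum k) l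
    simpa [Matrix.sum_apply] using this
  choose z hz using key
  refine ⟨fun i => Matrix.of fun k l => z k l i, ?_⟩
  intro i
  ext k l
  simpa [Matrix.sum_apply, Matrix.smul_apply, Matrix.sub_apply, smul_eq_mul] using hz k l i

end LapMat

section More
variable {α β γ : Type*} [Fintype α] [Fintype β] [Fintype γ]

lemma frobInner_smul_right (t : ℝ) (M N : Matrix α β ℝ) :
    frobInner M (t • N) = t * frobInner M N := by
  simp only [frobInner_eq_sum, Matrix.smul_apply, smul_eq_mul, Finset.mul_sum]
  exact Finset.sum_congr rfl fun j _ => Finset.sum_congr rfl fun k _ => by ring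

lemma frobSq_smul (t : ℝ) (N : Matrix α β ℝ) : frobSq (t • N) = t ^ 2 * frobSq N := by
  simp only [frobSq_eq, frobInner_eq_sum, Matrix.smul_apply, smul_eq_mul, Finset.mul_sum]
  exact Finset.sum_congr rfl fun j _ => Finset.sum_congr rfl fun k _ => by ring

end More

section More2
variable {n : ℕ} {d : Fin n → ℕ} {β : Type*}

lemma rowBlk_add (P Q : Matrix ((i : Fin n) × Fin (d i)) β ℝ) (i : Fin n) :
    rowBlk (P + Q) i = rowBlk P i + rowBlk Q i := rfl

lemma rowBlk_sub (P Q : Matrix ((i : Fin n) × Fin (d i)) β ℝ) (i : Fin n) :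
    rowBlk (P - Q) i = rowBlk P i - rowBlk Q i := rfl

lemma rowBlk_smul (t : ℝ) (P : Matrix ((i : Fin n) × Fin (d i)) β ℝ) (i : Fin n) :
    rowBlk (t • P) i = t • rowBlk P i := rfl

lemma rowBlk_blockRows (f : ∀ i, Matrix (Fin (d i)) β ℝ) (i : Fin n) :
    rowBlk (blockRows f) i = f i := rfl

lemma rowBlk_sum_embedRow (L : ∀ i, Matrix (Fin (d i)) β ℝ) (i : Fin n) :
    rowBlk (∑ j, embedRow j (L j)) i = L i := by
  ext k l
  show (∑ j, embedRow j (L j)) ⟨i, k⟩ l = L i k l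
  rw [Matrix.sum_apply]
  rw [Finset.sum_eq_single i]
  · simp [embedRow]
  · intro j _ hne
    simp [embedRow, hne.symm]
  · intro h; exact absurd (Finset.mem_univ i) h

end More2

end AuxRCC

theorem stmt_5 (n r p : ℕ) (hn : 0 < n) (mdim qdim : Fin n → ℕ)
    (a : Matrix (Fin n) (Fin n) ℝ)
    (hsym : ∀ i j, a i j = a j i) (hnonneg : ∀ i j, 0 ≤ a i j)
    (hdiag : ∀ i, a i i = 0) (hconn : GraphConnected a)
    (Av : ∀ i, Matrix (Fin (mdim i)) (Fin r) ℝ)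
    (Bl : ∀ i, Matrix (Fin p) (Fin (qdim i)) ℝ)
    (Fl : ∀ i, Matrix ((i' : Fin n) × Fin (mdim i')) (Fin (qdim i)) ℝ)
    (X : Fin n → Matrix (Fin r) (Fin p) ℝ)
    (Y : Fin n → Matrix ((i : Fin n) × Fin (mdim i)) (Fin p) ℝ) :
    (RCCfeas Av X Y ∧
        ∀ X' : Fin n → Matrix (Fin r) (Fin p) ℝ,
          ∀ Y' : Fin n → Matrix ((i : Fin n) × Fin (mdim i)) (Fin p) ℝ,
            RCCfeas Av X' Y' → RCCobj Bl Fl Y ≤ RCCobj Bl Fl Y') ↔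
      (∃ L1 : Fin n → Matrix (Fin r) (Fin p) ℝ,
        ∃ L2 : Fin n → Matrix ((i : Fin n) × Fin (mdim i)) (Fin p) ℝ,
          ∃ L3 : ∀ i, Matrix (Fin (mdim i)) (Fin p) ℝ,
            RCCequil a Av Bl Fl X Y L1 L2 L3) := by
  constructor
  · rintro ⟨⟨hX, hY, hcon⟩, hopt⟩
    -- stationarity: T = 0
    have hdir : ∀ D : Matrix (Fin r) (Fin p) ℝ,
        frobInner (∑ i, (Av i)ᵀ * rowBlk (∑ i', (Y i' * Bl i' - Fl i') * (Bl i')ᵀ) i) D = 0 := by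
      intro D
      have hfeas' : ∀ t : ℝ, RCCfeas Av (fun i => X i + t • D)
          (fun i => Y i + t • blockRows (fun j => Av j * D)) := by
        intro t
        refine ⟨fun i j => by dsimp only; rw [hX i j], fun i j => by dsimp only; rw [hY i j], ?_⟩
        intro i
        rw [Matrix.mul_add, Matrix.mul_smul, hcon i, rowBlk_add, rowBlk_smul, rowBlk_blockRows]
      have hval : ∀ t : ℝ, RCCobj Bl Fl (fun i => Y i + t • blockRows (fun j => Av j * D))
          = RCCobj Bl Fl Y
            + (2 * ∑ i, frobInner (Y i * Bl i - Fl i) (blockRows (fun j => Av j * D) * Bl i)) * t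
            + (∑ i, frobSq (blockRows (fun j => Av j * D) * Bl i)) * t ^ 2 := by
        intro t
        unfold RCCobj
        have e : ∀ i, (Y i + t • blockRows (fun j => Av j * D)) * Bl i - Fl i
            = (Y i * Bl i - Fl i) + t • (blockRows (fun j => Av j * D) * Bl i) := by
          intro i
          rw [Matrix.add_mul, Matrix.smul_mul]
          abel
        calc ∑ i, frobSq ((Y i + t • blockRows (fun j => Av j * D)) * Bl i - Fl i)
            = ∑ i, (frobSq (Y i * Bl i - Fl i)
                + 2 * (t * frobInner (Y i * Bl i - Fl i) (blockRows (fun j => Av j * D) * Bl i))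
                + t ^ 2 * frobSq (blockRows (fun j => Av j * D) * Bl i)) := by
              refine Finset.sum_congr rfl fun i _ => ?_
              rw [e i, frobSq_add, frobInner_smul_right, frobSq_smul]
          _ = _ := by
              simp only [Finset.sum_add_distrib, ← Finset.mul_sum]
              ring
      have hquad : ∀ t : ℝ, 0 ≤
          (2 * ∑ i, frobInner (Y i * Bl i - Fl i) (blockRows (fun j => Av j * D) * Bl i)) * t
            + (∑ i, frobSq (blockRows (fun j => Av j * D) * Bl i)) * t ^ 2 := by
        intro t
        have := hopt _ _ (hfeas' t)
        rw [hval t] at this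
        linarith
      have hd0 : 0 ≤ ∑ i, frobSq (blockRows (fun j => Av j * D) * Bl i) :=
        Finset.sum_nonneg fun i _ => frobSq_nonneg _
      have hc := quad_coeff_zero _ _ hd0 hquad
      have hid : ∑ i, frobInner (Y i * Bl i - Fl i) (blockRows (fun j => Av j * D) * Bl i)
          = frobInner (∑ i, (Av i)ᵀ * rowBlk (∑ i', (Y i' * Bl i' - Fl i') * (Bl i')ᵀ) i) D := by
        calc ∑ i, frobInner (Y i * Bl i - Fl i) (blockRows (fun j => Av j * D) * Bl i)
            = ∑ i, frobInner ((Y i * Bl i - Fl i) * (Bl i)ᵀ) (blockRows (fun j => Av j * D)) := by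
              exact Finset.sum_congr rfl fun i _ => frobInner_mul_right _ _ _
          _ = frobInner (∑ i, (Y i * Bl i - Fl i) * (Bl i)ᵀ) (blockRows (fun j => Av j * D)) :=
              (frobInner_sum_left _ _ _).symm
          _ = ∑ i, frobInner (rowBlk (∑ i', (Y i' * Bl i' - Fl i') * (Bl i')ᵀ) i)
                (rowBlk (blockRows (fun j => Av j * D)) i) := frobInner_sigma _ _
          _ = ∑ i, frobInner ((Av i)ᵀ * rowBlk (∑ i', (Y i' * Bl i' - Fl i') * (Bl i')ᵀ) i) D := by
              refine Finset.sum_congr rfl fun i _ => ?_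
              rw [rowBlk_blockRows]
              exact frobInner_matmul_left _ _ _
          _ = _ := (frobInner_sum_left _ _ _).symm
      rw [hid] at hc
      linarith
    have hT0 : (∑ i, (Av i)ᵀ * rowBlk (∑ i', (Y i' * Bl i' - Fl i') * (Bl i')ᵀ) i) = 0 :=
      frobInner_self_eq_zero (hdir _)
    -- multipliers
    obtain ⟨L2, hL2⟩ := lap_surj_mat a hn hsym hnonneg hconn
      (fun i => embedRow i (rowBlk (∑ i', (Y i' * Bl i' - Fl i') * (Bl i')ᵀ) i)
        - (Y i * Bl i - Fl i) * (Bl i)ᵀ)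
      (by
        rw [Finset.sum_sub_distrib, sum_embedRow_rowBlk]
        exact sub_self _)
    obtain ⟨L1, hL1⟩ := lap_surj_mat a hn hsym hnonneg hconn
      (fun i => -((Av i)ᵀ * rowBlk (∑ i', (Y i' * Bl i' - Fl i') * (Bl i')ᵀ) i))
      (by
        rw [Finset.sum_neg_distrib, hT0, neg_zero])
    refine ⟨L1, L2, fun i => rowBlk (∑ i', (Y i' * Bl i' - Fl i') * (Bl i')ᵀ) i, fun i => ?_⟩
    have e0 : Av i * X i - rowBlk (Y i) i = 0 := by rw [hcon i]; exact sub_self _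
    have hsum1 : (∑ j, a i j • (X i - X j)) = 0 :=
      Finset.sum_eq_zero fun j _ => by rw [hX i j]; simp
    have hsum2 : (∑ j, a i j • (Y i - Y j)) = 0 :=
      Finset.sum_eq_zero fun j _ => by rw [hY i j]; simp
    refine ⟨?_, ?_, hsum1, hsum2, e0⟩
    · unfold RCCrhsX
      rw [e0, hL1 i, hsum1, Matrix.mul_zero]
      abel
    · unfold RCCrhsY
      rw [e0, hL2 i, hsum2, embedRow_zero]
      abel
  · rintro ⟨L1, L2, L3, heq⟩
    have h1 : ∀ i, RCCrhsX a Av X Y L1 L3 i = 0 := fun i => (heq i).1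
    have h2 : ∀ i, RCCrhsY a Av Bl Fl X Y L2 L3 i = 0 := fun i => (heq i).2.1
    have h3 : ∀ i, (∑ j, a i j • (X i - X j)) = 0 := fun i => (heq i).2.2.1
    have h4 : ∀ i, (∑ j, a i j • (Y i - Y j)) = 0 := fun i => (heq i).2.2.2.1
    have h5 : ∀ i, Av i * X i - rowBlk (Y i) i = 0 := fun i => (heq i).2.2.2.2
    have hX : ∀ i j, X i = X j := lap_ker_mat a hsym hnonneg hconn X h3
    have hY : ∀ i j, Y i = Y j := lap_ker_mat a hsym hnonneg hconn Y h4
    have hcon : ∀ i, Av i * X i = rowBlk (Y i) i := fun i => sub_eq_zero.1 (h5 i)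
    refine ⟨⟨hX, hY, hcon⟩, ?_⟩
    rintro X' Y' ⟨hX', hY', hcon'⟩
    have i0 : Fin n := ⟨0, hn⟩
    -- key identities from the equilibrium
    have hGrow : ∀ i, (Y i * Bl i - Fl i) * (Bl i)ᵀ
        = embedRow i (L3 i) - ∑ j, a i j • (L2 i - L2 j) := by
      intro i
      have h := h2 i
      unfold RCCrhsY at h
      rw [h5 i, embedRow_zero, h4 i] at h
      refine eq_of_sub_eq_zero ?_
      have key : (Y i * Bl i - Fl i) * (Bl i)ᵀ - (embedRow i (L3 i) - ∑ j, a i j • (L2 i - L2 j))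
          = -(-((Y i * Bl i - Fl i) * (Bl i)ᵀ) + embedRow i (L3 i) + 0 - 0
              - ∑ j, a i j • (L2 i - L2 j)) := by abel
      rw [key, h, neg_zero]
    have hGs : ∑ i, (Y i * Bl i - Fl i) * (Bl i)ᵀ = ∑ i, embedRow i (L3 i) := by
      rw [Finset.sum_congr rfl fun i _ => hGrow i, Finset.sum_sub_distrib,
        lap_total_sum a hsym L2, sub_zero]
    have hAvL3 : ∑ i, (Av i)ᵀ * L3 i = 0 := by
      have e : ∀ i, (Av i)ᵀ * L3 i = -∑ j, a i j • (L1 i - L1 j) := by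
        intro i
        have h := h1 i
        unfold RCCrhsX at h
        rw [h5 i, h3 i, Matrix.mul_zero] at h
        refine eq_of_sub_eq_zero ?_
        have key : (Av i)ᵀ * L3 i - -∑ j, a i j • (L1 i - L1 j)
            = -(-0 - (Av i)ᵀ * L3 i - ∑ j, a i j • (L1 i - L1 j) - 0) := by abel
        rw [key, h, neg_zero]
      rw [Finset.sum_congr rfl fun i _ => e i, Finset.sum_neg_distrib,
        lap_total_sum a hsym L1, neg_zero]
    -- compare objectives
    have hYeq : ∀ i, Y' i * Bl i - Fl i = (Y i * Bl i - Fl i) + (Y' i0 - Y i0) * Bl i := by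
      intro i
      have hYi : Y' i = Y i + (Y' i0 - Y i0) := by
        rw [hY' i i0, hY i i0]; abel
      rw [hYi, Matrix.add_mul]; abel
    have hrowD : ∀ i, rowBlk (Y' i0 - Y i0) i = Av i * (X' i0 - X i0) := by
      intro i
      rw [rowBlk_sub, hY' i0 i, hY i0 i, ← hcon' i, ← hcon i, hX' i i0, hX i i0,
        Matrix.mul_sub]
    have hinner : ∑ i, frobInner (Y i * Bl i - Fl i) ((Y' i0 - Y i0) * Bl i) = 0 := by
      calc ∑ i, frobInner (Y i * Bl i - Fl i) ((Y' i0 - Y i0) * Bl i)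
          = ∑ i, frobInner ((Y i * Bl i - Fl i) * (Bl i)ᵀ) (Y' i0 - Y i0) :=
            Finset.sum_congr rfl fun i _ => frobInner_mul_right _ _ _
        _ = frobInner (∑ i, (Y i * Bl i - Fl i) * (Bl i)ᵀ) (Y' i0 - Y i0) :=
            (frobInner_sum_left _ _ _).symm
        _ = frobInner (∑ i, embedRow i (L3 i)) (Y' i0 - Y i0) := by rw [hGs]
        _ = ∑ i, frobInner (rowBlk (∑ j, embedRow j (L3 j)) i) (rowBlk (Y' i0 - Y i0) i) :=
            frobInner_sigma _ _
        _ = ∑ i, frobInner ((Av i)ᵀ * L3 i) (X' i0 - X i0) := by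
            refine Finset.sum_congr rfl fun i _ => ?_
            rw [rowBlk_sum_embedRow, hrowD i]
            exact frobInner_matmul_left _ _ _
        _ = frobInner (∑ i, (Av i)ᵀ * L3 i) (X' i0 - X i0) := (frobInner_sum_left _ _ _).symm
        _ = 0 := by rw [hAvL3]; exact frobInner_zero_left _
    have expand : ∑ i, frobSq (Y' i * Bl i - Fl i)
        = ∑ i, frobSq (Y i * Bl i - Fl i)
            + (2 * ∑ i, frobInner (Y i * Bl i - Fl i) ((Y' i0 - Y i0) * Bl i)
              + ∑ i, frobSq ((Y' i0 - Y i0) * Bl i)) := by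
      have e : ∀ i, frobSq (Y' i * Bl i - Fl i)
          = frobSq (Y i * Bl i - Fl i)
            + 2 * frobInner (Y i * Bl i - Fl i) ((Y' i0 - Y i0) * Bl i)
            + frobSq ((Y' i0 - Y i0) * Bl i) := fun i => by rw [hYeq i, frobSq_add]
      rw [Finset.sum_congr rfl fun i _ => e i]
      simp only [Finset.sum_add_distrib, ← Finset.mul_sum]
      ring
    unfold RCCobj
    calc ∑ i, frobSq (Y i * Bl i - Fl i)
        ≤ ∑ i, frobSq (Y i * Bl i - Fl i)
            + (2 * ∑ i, frobInner (Y i * Bl i - Fl i) ((Y' i0 - Y i0) * Bl i)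
              + ∑ i, frobSq ((Y' i0 - Y i0) * Bl i)) := by
          rw [hinner]
          have : 0 ≤ ∑ i, frobSq ((Y' i0 - Y i0) * Bl i) :=
            Finset.sum_nonneg fun i _ => frobSq_nonneg _
          linarith
      _ = ∑ i, frobSq (Y' i * Bl i - Fl i) := expand.symm
end
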